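/- Let L be a finite lattice with least element 0 and let T be a CD-base of L. Order orthogonal systems of L by: S₁ ≤ S₂ iff for each a ∈ S₁ there exists b ∈ S₂ with a ≤ b. Then there exists a family {S_λ : λ ∈ Λ} of orthogonal systems of L that is totally ordered by this relation (a chain in Ort(L)) such that T ∖ {0} = ⋃_{λ∈Λ} S_λ. In particular, every CD-base is the union of the orthogonal systems belonging to such a chain. -/

import Mathlib

/-- A subset `X` of a lattice with least element `⊥` is CD-independent if any two of its
elements are comparable or disjoint (meet `⊥`). -/
def CDIndependent {L : Type*} [Lattice L] [OrderBot L] (X : Set L) : Prop :=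
  ∀ x ∈ X, ∀ y ∈ X, x ≤ y ∨ y ≤ x ∨ x ⊓ y = ⊥

/-- A CD-base is a CD-independent set maximal with respect to inclusion. -/
def IsCDBase {L : Type*} [Lattice L] [OrderBot L] (T : Set L) : Prop :=
  CDIndependent T ∧ ∀ X : Set L, CDIndependent X → T ⊆ X → X = T

/-- An orthogonal system: a nonempty set of nonzero elements, pairwise disjoint. -/
def IsOrthoSystem {L : Type*} [Lattice L] [OrderBot L] (O : Set L) : Prop :=
  O.Nonempty ∧ (∀ a ∈ O, a ≠ ⊥) ∧ ∀ a ∈ O, ∀ b ∈ O, a ≠ b → a ⊓ b = ⊥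

/-- The ordering of orthogonal systems: `S₁ ≤ S₂` iff every element of `S₁`
lies below some element of `S₂`. -/
def orthoLE {L : Type*} [Lattice L] (S₁ S₂ : Set L) : Prop :=
  ∀ a ∈ S₁, ∃ b ∈ S₂, a ≤ b

/-- Every CD-base of a finite lattice with least element is, after removing `⊥`, the
union of a chain (w.r.t. `orthoLE`) of orthogonal systems. -/
theorem cdbase_union_of_chain_of_orthosystems
    {L : Type*} [Lattice L] [OrderBot L] [Fintype L]
    (T : Set L) (hT : IsCDBase T) :
    ∃ C : Set (Set L), (∀ S ∈ C, IsOrthoSystem S) ∧ IsChain orthoLE C ∧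
      T \ {⊥} = ⋃₀ C := by
  classical
  obtain ⟨hCD, -⟩ := hT
  set T' : Set L := T \ {⊥} with hT'def
  have hne_bot : ∀ x ∈ T', x ≠ ⊥ := fun x hx => hx.2
  set U : L → Set L := fun x => {y | y ∈ T' ∧ x ≤ y} with hUdef
  have hUmem : ∀ x z, z ∈ U x ↔ z ∈ T' ∧ x ≤ z := fun x z => Iff.rfl
  set d : L → ℕ := fun x => (U x).ncard with hddef
  have hdval : ∀ x, d x = (U x).ncard := fun _ => rfl
  have hUfin : ∀ x, (U x).Finite := fun x => Set.toFinite _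
  have hmemU : ∀ x ∈ T', x ∈ U x := fun x hx => ⟨hx, le_rfl⟩
  have hdpos : ∀ x ∈ T', 1 ≤ d x := by
    intro x hx
    have hne : (U x).Nonempty := ⟨x, hmemU x hx⟩
    exact (Set.ncard_pos (hUfin x)).mpr hne
  have hcomp : ∀ x ∈ T', ∀ y ∈ U x, ∀ z ∈ U x, y ≤ z ∨ z ≤ y := by
    intro x hx y hy z hz
    rcases hCD y hy.1.1 z hz.1.1 with h | h | h
    · exact Or.inl h
    · exact Or.inr h
    · exact absurd (le_antisymm (h ▸ le_inf hy.2 hz.2) bot_le) (hne_bot x hx)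
  have hmono : ∀ x ∈ T', ∀ y : L, x < y → d y < d x := by
    intro x hx y hxy
    have hsub : U y ⊆ U x := fun z hz => ⟨hz.1, le_trans hxy.le hz.2⟩
    have hss : U y ⊂ U x := by
      refine (Set.ssubset_iff_of_subset hsub).mpr ⟨x, hmemU x hx, fun hxUy => ?_⟩
      exact absurd hxUy.2 hxy.not_ge
    exact Set.ncard_lt_ncard hss (hUfin x)
  -- key existence lemma: below any x there is an element of each smaller depth above x
  have hexistsAux : ∀ n : ℕ, ∀ x ∈ T', d x = n → ∀ k, 1 ≤ k → k ≤ n →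
      ∃ b ∈ T', x ≤ b ∧ d b = k := by
    intro n
    induction n using Nat.strong_induction_on with
    | _ n ih =>
      intro x hx hdx k hk1 hkn
      rcases eq_or_lt_of_le hkn with rfl | hlt
      · exact ⟨x, hx, le_rfl, hdx⟩
      · set V : Set L := {z | z ∈ U x ∧ x < z} with hVdef
        have hVeq : V = U x \ {x} := by
          ext z
          constructor
          · exact fun hz => ⟨hz.1, fun h => absurd hz.2 (by simp_all)⟩
          · exact fun hz => ⟨hz.1, lt_of_le_of_ne hz.1.2 (fun h => hz.2 h.symm)⟩
        have hVcard : V.ncard = n - 1 := by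
          rw [hVeq, Set.ncard_diff_singleton_of_mem (hmemU x hx), ← hdval, hdx]
        have hVne : V.Nonempty := by
          rw [← Set.ncard_pos (by rw [hVeq]; exact (hUfin x).diff), hVcard]
          omega
        obtain ⟨y, hyV, hymax⟩ : ∃ y ∈ V, ∀ z ∈ V, d y ≤ d z → d y = d z := by
            obtain ⟨y, hyV, hy⟩ := Set.exists_max_image V d (Set.toFinite V) hVne
            exact ⟨y, hyV, fun z hz h => le_antisymm h (hy z hz)⟩
        have hyT' : y ∈ T' := hyV.1.1
        have hUy : U y = V := by
          apply Set.Subset.antisymm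
          · intro z hz
            exact ⟨⟨hz.1, le_trans hyV.2.le hz.2⟩, lt_of_lt_of_le hyV.2 hz.2⟩
          · intro z hzV
            rcases hcomp x hx z hzV.1 y hyV.1 with h | h
            · rcases eq_or_lt_of_le h with h1 | h1
              · exact h1 ▸ hmemU y hyT'
              · have hdlt := hmono z hzV.1.1 y h1
                exact absurd (hymax z hzV hdlt.le) (ne_of_lt hdlt)
            · exact ⟨hzV.1.1, h⟩
        have hdy : d y = n - 1 := by rw [hdval, hUy, hVcard]
        obtain ⟨b, hb, hyb, hdb⟩ := ih (n - 1) (by omega) y hyT' hdy k hk1 (by omega)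
        exact ⟨b, hb, le_trans hyV.2.le hyb, hdb⟩
  have hexists : ∀ x ∈ T', ∀ k, 1 ≤ k → k ≤ d x → ∃ b ∈ T', x ≤ b ∧ d b = k :=
    fun x hx k hk1 hk2 => hexistsAux (d x) x hx rfl k hk1 hk2
  -- the level sets
  set Lvl : ℕ → Set L := fun k => {y | y ∈ T' ∧ d y = k} with hLvl
  refine ⟨{S | ∃ x ∈ T', S = Lvl (d x)}, ?_, ?_, ?_⟩
  · rintro S ⟨x, hx, rfl⟩
    refine ⟨⟨x, hx, rfl⟩, fun a ha => hne_bot a ha.1, ?_⟩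
    intro a ha b hb hab
    rcases hCD a ha.1.1 b hb.1.1 with h | h | h
    · have := hmono a ha.1 b (lt_of_le_of_ne h hab)
      exact absurd (ha.2.trans hb.2.symm) (by omega)
    · have := hmono b hb.1 a (lt_of_le_of_ne h (Ne.symm hab))
      exact absurd (ha.2.trans hb.2.symm) (by omega)
    · exact h
  · rintro S1 ⟨x, hx, rfl⟩ S2 ⟨y, hy, rfl⟩ -
    rcases le_total (d x) (d y) with h | h
    · refine Or.inr ?_
      intro a ha
      obtain ⟨b, hb, hab, hdb⟩ := hexists a ha.1 (d x) (hdpos x hx) (ha.2 ▸ h)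
      exact ⟨b, ⟨hb, hdb⟩, hab⟩
    · refine Or.inl ?_
      intro a ha
      obtain ⟨b, hb, hab, hdb⟩ := hexists a ha.1 (d y) (hdpos y hy) (ha.2 ▸ h)
      exact ⟨b, ⟨hb, hdb⟩, hab⟩
  · ext z
    constructor
    · intro hz
      exact ⟨Lvl (d z), ⟨z, hz, rfl⟩, hz, rfl⟩
    · rintro ⟨S, ⟨x, hx, rfl⟩, hz⟩
      exact hz.1
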